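/- The punctured null quadric 𝔄ⁿ⁻¹_* is path-connected for every n ≥ 3. Concretely: for any two points z, w ∈ {ζ ∈ ℂⁿ \ {0} : ∑ ζ_j² = 0} with n ≥ 3, there is a continuous path in the punctured null quadric from z to w. -/

import Mathlib

open scoped RealInnerProductSpace
open Finset

variable {n : ℕ}

/-- Set of orthonormal 2-frames in Euclidean space. -/
def frameSet (n : ℕ) : Set (EuclideanSpace ℝ (Fin n) × EuclideanSpace ℝ (Fin n)) :=
  {p | ‖p.1‖ = 1 ∧ ‖p.2‖ = 1 ∧ ⟪p.1, p.2⟫ = 0}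

lemma aux_moveY (hn : 3 ≤ n) (x y y' : EuclideanSpace ℝ (Fin n))
    (hx : ‖x‖ = 1) (hy : ‖y‖ = 1) (hy' : ‖y'‖ = 1)
    (h1 : ⟪x, y⟫ = 0) (h2 : ⟪x, y'⟫ = 0) :
    JoinedIn (frameSet n) (x, y) (x, y') := by
  set K := (ℝ ∙ x)ᗮ with hK
  have hxne : x ≠ 0 := fun h => by simp [h] at hx
  have hrankK : Module.finrank ℝ K = n - 1 := by
    have h1 : Module.finrank ℝ (ℝ ∙ x) = 1 := finrank_span_singleton hxne
    have h2 := Submodule.finrank_add_finrank_orthogonal (K := (ℝ ∙ x))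
    rw [h1, finrank_euclideanSpace_fin] at h2
    have h2' : 1 + Module.finrank ℝ K = n := h2
    omega
  have hrank : 1 < Module.rank ℝ K := by
    rw [← Module.finrank_eq_rank]
    have : 1 < Module.finrank ℝ K := by omega
    exact_mod_cast this
  have hsph : IsPathConnected (Metric.sphere (0 : K) 1) :=
    isPathConnected_sphere hrank 0 zero_le_one
  have hymem : y ∈ K := Submodule.mem_orthogonal_singleton_iff_inner_right.2 h1
  have hy'mem : y' ∈ K := Submodule.mem_orthogonal_singleton_iff_inner_right.2 h2
  have hj : JoinedIn (Metric.sphere (0 : K) 1) ⟨y, hymem⟩ ⟨y', hy'mem⟩ :=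
    hsph.joinedIn _ (by simp [mem_sphere_iff_norm, hy, Submodule.norm_coe]) _
      (by simp [mem_sphere_iff_norm, hy', Submodule.norm_coe])
  have hcont : Continuous fun v : K => ((x, (v : EuclideanSpace ℝ (Fin n)))) :=
    continuous_const.prodMk continuous_subtype_val
  have hsub : (fun v : K => ((x, (v : EuclideanSpace ℝ (Fin n))))) '' (Metric.sphere (0 : K) 1) ⊆ frameSet n := by
    rintro p ⟨v, hv, rfl⟩
    have hvn : ‖(v : EuclideanSpace ℝ (Fin n))‖ = 1 := by
      simpa [mem_sphere_iff_norm] using hv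
    refine ⟨hx, hvn, ?_⟩
    exact Submodule.mem_orthogonal_singleton_iff_inner_right.1 v.2
  exact (hj.map hcont).mono hsub

lemma aux_moveX (hn : 3 ≤ n) (x x' y : EuclideanSpace ℝ (Fin n))
    (hx : ‖x‖ = 1) (hx' : ‖x'‖ = 1) (hy : ‖y‖ = 1)
    (h1 : ⟪x, y⟫ = 0) (h2 : ⟪x', y⟫ = 0) :
    JoinedIn (frameSet n) (x, y) (x', y) := by
  have h := aux_moveY hn y x x' hy hx hx'
    (by rwa [real_inner_comm]) (by rwa [real_inner_comm])
  have hcont : Continuous fun p : EuclideanSpace ℝ (Fin n) × EuclideanSpace ℝ (Fin n) =>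
      (p.2, p.1) := continuous_snd.prodMk continuous_fst
  have hsub : (fun p : EuclideanSpace ℝ (Fin n) × EuclideanSpace ℝ (Fin n) => (p.2, p.1)) ''
      frameSet n ⊆ frameSet n := by
    rintro p ⟨q, ⟨hq1, hq2, hq3⟩, rfl⟩
    exact ⟨hq2, hq1, by rwa [real_inner_comm]⟩
  exact (h.map hcont).mono hsub

lemma aux_frames (hn : 3 ≤ n) (x y x' y' : EuclideanSpace ℝ (Fin n))
    (hp : (x, y) ∈ frameSet n) (hq : (x', y') ∈ frameSet n) :
    JoinedIn (frameSet n) (x, y) (x', y') := by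
  obtain ⟨hx, hy, hxy⟩ := hp
  obtain ⟨hx', hy', hxy'⟩ := hq
  -- find a unit vector orthogonal to both x and x'
  set K := Submodule.span ℝ ({x, x'} : Set (EuclideanSpace ℝ (Fin n))) with hKdef
  have hKrank : Module.finrank ℝ K ≤ 2 := by
    classical
    refine (finrank_span_le_card ({x, x'} : Set (EuclideanSpace ℝ (Fin n)))).trans ?_
    rw [Set.toFinset_insert, Set.toFinset_singleton]
    exact (Finset.card_insert_le _ _).trans (by simp)
  have hKbot : Kᗮ ≠ ⊥ := by
    intro h
    have hKtop : K = ⊤ := Submodule.orthogonal_eq_bot_iff.1 h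
    have := finrank_top ℝ (EuclideanSpace ℝ (Fin n))
    rw [← hKtop] at this
    rw [this, finrank_euclideanSpace_fin] at hKrank
    omega
  obtain ⟨v, hvK, hvne⟩ := Submodule.exists_mem_ne_zero_of_ne_bot hKbot
  set y₁ : EuclideanSpace ℝ (Fin n) := ‖v‖⁻¹ • v with hy₁def
  have hvnorm : ‖v‖ ≠ 0 := norm_ne_zero_iff.2 hvne
  have hy₁ : ‖y₁‖ = 1 := by
    rw [hy₁def, norm_smul, norm_inv, norm_norm, inv_mul_cancel₀ hvnorm]
  have horth : ∀ u ∈ K, ⟪u, y₁⟫ = 0 := by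
    intro u hu
    rw [hy₁def, real_inner_smul_right, (Submodule.mem_orthogonal K v).1 hvK u hu, mul_zero]
  have hxK : x ∈ K := Submodule.subset_span (Set.mem_insert _ _)
  have hx'K : x' ∈ K := Submodule.subset_span (Set.mem_insert_of_mem _ rfl)
  have step1 : JoinedIn (frameSet n) (x, y) (x, y₁) :=
    aux_moveY hn x y y₁ hx hy hy₁ hxy (horth x hxK)
  have step2 : JoinedIn (frameSet n) (x, y₁) (x', y₁) :=
    aux_moveX hn x x' y₁ hx hx' hy₁ (horth x hxK) (horth x' hx'K)
  have step3 : JoinedIn (frameSet n) (x', y₁) (x', y') :=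
    aux_moveY hn x' y₁ y' hx' hy₁ hy' (horth x' hx'K) hxy'
  exact (step1.trans step2).trans step3

lemma aux_inner_sum (x y : EuclideanSpace ℝ (Fin n)) : ⟪x, y⟫ = ∑ j, x j * y j := by
  simp [PiLp.inner_apply, RCLike.inner_apply, mul_comm]

lemma aux_norm_sq (x : EuclideanSpace ℝ (Fin n)) : ‖x‖ ^ 2 = ∑ j, x j ^ 2 := by
  rw [← real_inner_self_eq_norm_sq, aux_inner_sum]
  simp [sq]

lemma aux_quad_iff (z : Fin n → ℂ) :
    (∑ j, z j ^ 2 = 0) ↔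
      (∑ j, (z j).re ^ 2 = ∑ j, (z j).im ^ 2 ∧ ∑ j, (z j).re * (z j).im = 0) := by
  rw [Complex.ext_iff]
  simp only [Complex.re_sum, Complex.im_sum, Complex.zero_re, Complex.zero_im]
  have h1 : ∀ j, ((z j) ^ 2).re = (z j).re ^ 2 - (z j).im ^ 2 := by
    intro j; rw [sq, Complex.mul_re]; ring
  have h2 : ∀ j, ((z j) ^ 2).im = 2 * ((z j).re * (z j).im) := by
    intro j; rw [sq, Complex.mul_im]; ring
  rw [Finset.sum_congr rfl fun j _ => h1 j, Finset.sum_congr rfl fun j _ => h2 j,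
    Finset.sum_sub_distrib, ← Finset.mul_sum]
  constructor
  · rintro ⟨a, b⟩
    exact ⟨by linarith, by linarith⟩
  · rintro ⟨a, b⟩
    exact ⟨by linarith, by linarith⟩

/-- The punctured null quadric as a set. -/
def nullQuadric (n : ℕ) : Set (Fin n → ℂ) := {ζ | ζ ≠ 0 ∧ ∑ j, ζ j ^ 2 = 0}

/-- combine a pair of real vectors into a complex vector -/
def cmb (p : EuclideanSpace ℝ (Fin n) × EuclideanSpace ℝ (Fin n)) : Fin n → ℂ :=
  fun j => (p.1 j : ℂ) + (p.2 j : ℂ) * Complex.I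

lemma cmb_continuous : Continuous (cmb (n := n)) := by
  apply continuous_pi
  intro j
  have h1 : Continuous fun p : EuclideanSpace ℝ (Fin n) × EuclideanSpace ℝ (Fin n) => p.1 j :=
    (EuclideanSpace.proj j).continuous.comp continuous_fst
  have h2 : Continuous fun p : EuclideanSpace ℝ (Fin n) × EuclideanSpace ℝ (Fin n) => p.2 j :=
    (EuclideanSpace.proj j).continuous.comp continuous_snd
  exact (Complex.continuous_ofReal.comp h1).add
    ((Complex.continuous_ofReal.comp h2).mul continuous_const)

lemma cmb_mem_quadric {p : EuclideanSpace ℝ (Fin n) × EuclideanSpace ℝ (Fin n)}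
    (hp : p ∈ frameSet n) : cmb p ∈ nullQuadric n := by
  obtain ⟨h1, h2, h3⟩ := hp
  constructor
  · intro h
    have hx : p.1 = 0 := by
      ext j
      have h0 := congrFun h j
      simp only [cmb, Pi.zero_apply] at h0
      have h0' := congrArg Complex.re h0
      simpa using h0'
    rw [hx, norm_zero] at h1
    exact zero_ne_one h1
  · rw [aux_quad_iff]
    constructor
    · have e1 : ∀ j, ((cmb p) j).re = p.1 j := by intro j; simp [cmb]
      have e2 : ∀ j, ((cmb p) j).im = p.2 j := by intro j; simp [cmb]
      simp only [e1, e2]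
      rw [← aux_norm_sq, ← aux_norm_sq, h1, h2]
    · have e1 : ∀ j, ((cmb p) j).re = p.1 j := by intro j; simp [cmb]
      have e2 : ∀ j, ((cmb p) j).im = p.2 j := by intro j; simp [cmb]
      simp only [e1, e2]
      rw [← aux_inner_sum, h3]

lemma aux_normalize {z : Fin n → ℂ} (hz : z ∈ nullQuadric n) :
    ∃ x y : EuclideanSpace ℝ (Fin n), (x, y) ∈ frameSet n ∧
      JoinedIn (nullQuadric n) z (cmb (x, y)) := by
  obtain ⟨hz0, hzq⟩ := hz
  obtain ⟨hsum, hdot⟩ := (aux_quad_iff z).1 hzq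
  set X : EuclideanSpace ℝ (Fin n) := (WithLp.equiv 2 (Fin n → ℝ)).symm fun j => (z j).re with hX
  set Y : EuclideanSpace ℝ (Fin n) := (WithLp.equiv 2 (Fin n → ℝ)).symm fun j => (z j).im with hY
  have hXapp : ∀ j, X j = (z j).re := fun j => rfl
  have hYapp : ∀ j, Y j = (z j).im := fun j => rfl
  set r : ℝ := ‖X‖ with hr
  have hrpos : 0 < r := by
    rcases (norm_nonneg X).lt_or_eq with h | h
    · exact h
    · exfalso
      have hX0 : X = 0 := by rw [← norm_eq_zero, ← h]
      have hre : ∀ j, (z j).re = 0 := by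
        intro j
        rw [← hXapp j, hX0]
        rfl
      have him : ∀ j, (z j).im = 0 := by
        have hs : ∑ j, (z j).im ^ 2 = 0 := by
          rw [← hsum]
          simp [hre]
        intro j
        have := (Finset.sum_eq_zero_iff_of_nonneg (fun i _ => sq_nonneg ((z i).im))).1 hs j
          (Finset.mem_univ j)
        exact pow_eq_zero_iff two_ne_zero |>.1 this
      exact hz0 (funext fun j => Complex.ext (hre j) (him j))
  have hYnorm : ‖Y‖ = r := by
    have h1 : ‖Y‖ ^ 2 = r ^ 2 := by
      rw [aux_norm_sq, aux_norm_sq]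
      simp only [hXapp, hYapp]
      exact hsum.symm
    have h2 := norm_nonneg Y
    apply le_antisymm <;> nlinarith
  refine ⟨r⁻¹ • X, r⁻¹ • Y, ⟨?_, ?_, ?_⟩, ?_⟩
  · rw [norm_smul, Real.norm_eq_abs, abs_inv, abs_of_pos hrpos, ← hr, inv_mul_cancel₀ (ne_of_gt hrpos)]
  · rw [norm_smul, Real.norm_eq_abs, abs_inv, abs_of_pos hrpos, hYnorm, inv_mul_cancel₀ (ne_of_gt hrpos)]
  · have hXY : ⟪X, Y⟫ = 0 := by
      rw [aux_inner_sum]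
      simp only [hXapp, hYapp]
      exact hdot
    rw [real_inner_smul_left, real_inner_smul_right, hXY, mul_zero, mul_zero]
  · have hu : cmb (r⁻¹ • X, r⁻¹ • Y) = r⁻¹ • z := by
      funext j
      have e1 : (r⁻¹ • X) j = r⁻¹ * (z j).re := by rw [PiLp.smul_apply, hXapp, smul_eq_mul]
      have e2 : (r⁻¹ • Y) j = r⁻¹ * (z j).im := by rw [PiLp.smul_apply, hYapp, smul_eq_mul]
      simp only [cmb, e1, e2, Pi.smul_apply, Complex.real_smul]
      apply Complex.ext <;> simp [Complex.mul_re, Complex.mul_im]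
    have hIoi : IsPathConnected (Set.Ioi (0 : ℝ)) :=
      (convex_Ioi 0).isPathConnected ⟨1, by norm_num⟩
    have hj := hIoi.joinedIn 1 (by norm_num) r⁻¹ (Set.mem_Ioi.2 (inv_pos.2 hrpos))
    have hcont : Continuous fun c : ℝ => c • z := continuous_id.smul continuous_const
    have hsub : (fun c : ℝ => c • z) '' Set.Ioi 0 ⊆ nullQuadric n := by
      rintro ζ ⟨c, hc, rfl⟩
      refine ⟨smul_ne_zero (ne_of_gt hc) hz0, ?_⟩
      have key : ∀ j, (c • z) j ^ 2 = (c : ℂ) ^ 2 * z j ^ 2 := by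
        intro j
        simp only [Pi.smul_apply, Complex.real_smul]
        ring
      rw [Finset.sum_congr rfl fun j _ => key j, ← Finset.mul_sum, hzq, mul_zero]
    have hjoin := (hj.map hcont).mono hsub
    simp only [one_smul] at hjoin
    rw [hu]
    exact hjoin

/-- The punctured null quadric `𝔄ⁿ⁻¹_* = {z ∈ ℂⁿ \ {0} : ∑ z_j² = 0}` is
path-connected for every `n ≥ 3`: any two of its points are joined by a
continuous path within it. -/
theorem stmt11 (n : ℕ) (hn : 3 ≤ n) (z w : Fin n → ℂ)
    (hz : z ∈ {ζ : Fin n → ℂ | ζ ≠ 0 ∧ ∑ j, ζ j ^ 2 = 0})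
    (hw : w ∈ {ζ : Fin n → ℂ | ζ ≠ 0 ∧ ∑ j, ζ j ^ 2 = 0}) :
    JoinedIn {ζ : Fin n → ℂ | ζ ≠ 0 ∧ ∑ j, ζ j ^ 2 = 0} z w := by
  change JoinedIn (nullQuadric n) z w
  obtain ⟨x, y, hf, hj⟩ := aux_normalize (n := n) hz
  obtain ⟨x', y', hf', hj'⟩ := aux_normalize (n := n) hw
  have hmid : JoinedIn (nullQuadric n) (cmb (x, y)) (cmb (x', y')) := by
    refine ((aux_frames hn x y x' y' hf hf').map cmb_continuous).mono ?_
    rintro ζ ⟨p, hp, rfl⟩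
    exact cmb_mem_quadric hp
  exact (hj.trans hmid).trans hj'.symm
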